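/- Let m,n,x,y be positive integers with gcd(x,y)=gcd(m,y)=gcd(n,x)=1, and let f: T_{xm,yn} → T_{m,n} be the coordinatewise reduction map f(a₁,a₂)=(a₁ mod m, a₂ mod n). Then for every line ℓ on T_{m,n}, the preimage f⁻¹(ℓ) is a line on T_{xm,yn}. -/

import Mathlib

/-- A line on the discrete torus `ZMod m × ZMod n`: the image of an integer line
`{A + k•(u,v) : k ∈ ℤ}` with `gcd(u,v) = 1`. -/
def torusLine (m n : ℕ) (L : Set (ZMod m × ZMod n)) : Prop :=
  ∃ (A : ZMod m × ZMod n) (u v : ℤ), Int.gcd u v = 1 ∧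
    L = {P | ∃ k : ℤ, P = (A.1 + ((k * u : ℤ) : ZMod m), A.2 + ((k * v : ℤ) : ZMod n))}

/-- Three points of the torus are collinear if some line contains all three. -/
def torusCollinear (m n : ℕ) (P Q R : ZMod m × ZMod n) : Prop :=
  ∃ L, torusLine m n L ∧ P ∈ L ∧ Q ∈ L ∧ R ∈ L

/-- No three (distinct) points of `S` lie on a common line. -/
def noThreeInLine (m n : ℕ) (S : Set (ZMod m × ZMod n)) : Prop :=
  ∀ P ∈ S, ∀ Q ∈ S, ∀ R ∈ S, P ≠ Q → P ≠ R → Q ≠ R → ¬ torusCollinear m n P Q R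

/-- `tau m n`: maximal number of points on the torus with no three collinear. -/
noncomputable def tau (m n : ℕ) : ℕ :=
  sSup {k | ∃ S : Finset (ZMod m × ZMod n), noThreeInLine m n ↑S ∧ S.card = k}

open Int in

/-- Coprime CRT over ℤ. -/
lemma crtZ (x y a b : ℤ) (h : IsCoprime x y) :
    ∃ r : ℤ, r ≡ a [ZMOD x] ∧ r ≡ b [ZMOD y] := by
  obtain ⟨c, d, hcd⟩ := h
  refine ⟨a * (d * y) + b * (c * x), ?_, ?_⟩
  · rw [Int.modEq_iff_dvd]
    have : a - (a * (d * y) + b * (c * x)) = (a - b) * c * x := by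
      have h1 : d * y = 1 - c * x := by linarith
      rw [h1]; ring
    exact ⟨(a - b) * c, by linarith [this]⟩
  · rw [Int.modEq_iff_dvd]
    have : b - (a * (d * y) + b * (c * x)) = (b - a) * d * y := by
      have h1 : c * x = 1 - d * y := by linarith
      rw [h1]; ring
    exact ⟨(b - a) * d, by linarith [this]⟩

/-- Lift a residue coprime to `M` to a nonzero integer coprime to `M * N`. -/
lemma unitLift (a : ℤ) (M N : ℕ) (hM : 0 < M) (hN : 0 < N) (h : IsCoprime a (M : ℤ)) :
    ∃ b : ℤ, b ≠ 0 ∧ b ≡ a [ZMOD (M : ℤ)] ∧ IsCoprime b ((M : ℤ) * (N : ℤ)) := by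
  haveI : NeZero (M * N) := ⟨by positivity⟩
  haveI : NeZero M := ⟨hM.ne'⟩
  obtain ⟨c, d, hcd⟩ := h
  have hunit : IsUnit ((a : ZMod M)) := by
    apply IsUnit.of_mul_eq_one ((c : ZMod M))
    have : ((c * a + d * M : ℤ) : ZMod M) = ((1 : ℤ) : ZMod M) := by rw [hcd]
    push_cast at this
    rw [ZMod.natCast_self, mul_zero, add_zero] at this
    rw [mul_comm]; exact_mod_cast this
  obtain ⟨w, hw⟩ := ZMod.unitsMap_surjective (dvd_mul_right M N) hunit.unit
  set b0 : ℕ := ((w : ZMod (M * N)).val) with hb0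
  have hcop : Nat.Coprime b0 (M * N) := ZMod.val_coe_unit_coprime w
  by_cases hz : b0 = 0
  · have h1 : M * N = 1 := by
      have := hcop; rw [hz] at this
      simpa [Nat.Coprime] using this
    have hM1 : M = 1 := Nat.eq_one_of_mul_eq_one_right h1
    refine ⟨1, one_ne_zero, ?_, isCoprime_one_left⟩
    rw [hM1]; exact Int.modEq_one
  · refine ⟨(b0 : ℤ), by exact_mod_cast hz, ?_, ?_⟩
    · rw [← ZMod.intCast_eq_intCast_iff]
      have h1 : ((b0 : ℕ) : ZMod (M * N)) = (w : ZMod (M * N)) := by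
        rw [hb0, ZMod.natCast_val, ZMod.cast_id]
      have h2 : (ZMod.castHom (dvd_mul_right M N) (ZMod M)) ((w : ZMod (M * N))) 
          = (a : ZMod M) := by
        have := congrArg (Units.val) hw
        rw [ZMod.unitsMap_def] at this
        simpa [IsUnit.unit_spec] using this
      calc ((b0 : ℤ) : ZMod M) = ((b0 : ℕ) : ZMod M) := by push_cast; ring
        _ = (ZMod.castHom (dvd_mul_right M N) (ZMod M)) (((b0 : ℕ) : ZMod (M * N))) := by
            rw [map_natCast]
        _ = (a : ZMod M) := by rw [h1, h2]
    · rw [Int.isCoprime_iff_gcd_eq_one]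
      have : ((M : ℤ) * N) = ((M * N : ℕ) : ℤ) := by push_cast; ring
      rw [this, Int.gcd_natCast_natCast]
      exact hcop

open Int in
lemma keyLemma (m n x y : ℕ) (hm : 0 < m) (hn : 0 < n) (hx : 0 < x) (hy : 0 < y)
    (hxy : Nat.gcd x y = 1) (hmy : Nat.gcd m y = 1) (hnx : Nat.gcd n x = 1)
    (u v : ℤ) (huv : Int.gcd u v = 1) :
    ∃ U V k : ℤ, Int.gcd U V = 1 ∧ U ≡ u [ZMOD (m : ℤ)] ∧ V ≡ v [ZMOD (n : ℤ)] ∧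
      k * U ≡ (m : ℤ) [ZMOD ((x : ℤ) * m)] ∧ k * V ≡ (n : ℤ) [ZMOD ((y : ℤ) * n)] := by
  -- set up gcds
  set g : ℕ := Int.gcd u (m : ℤ) with hgdef
  set h : ℕ := Int.gcd v (n : ℤ) with hhdef
  have hgpos : 0 < g := Int.gcd_pos_iff.mpr (Or.inr (by exact_mod_cast hm.ne'))
  have hhpos : 0 < h := Int.gcd_pos_iff.mpr (Or.inr (by exact_mod_cast hn.ne'))
  have hgu : (g : ℤ) ∣ u := Int.gcd_dvd_left _ _
  have hgm : (g : ℤ) ∣ (m : ℤ) := Int.gcd_dvd_right _ _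
  have hhv : (h : ℤ) ∣ v := Int.gcd_dvd_left _ _
  have hhn : (h : ℤ) ∣ (n : ℤ) := Int.gcd_dvd_right _ _
  have hgmN : g ∣ m := by exact_mod_cast hgm
  have hhnN : h ∣ n := by exact_mod_cast hhn
  set m₁ : ℕ := m / g with hm₁def
  set n₁ : ℕ := n / h with hn₁def
  have hmm₁ : m = g * m₁ := (Nat.mul_div_cancel' hgmN).symm
  have hnn₁ : n = h * n₁ := (Nat.mul_div_cancel' hhnN).symm
  have hm₁pos : 0 < m₁ := Nat.div_pos (Nat.le_of_dvd hm hgmN) hgpos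
  have hn₁pos : 0 < n₁ := Nat.div_pos (Nat.le_of_dvd hn hhnN) hhpos
  set u₁ : ℤ := u / (g : ℤ) with hu₁def
  set v₁ : ℤ := v / (h : ℤ) with hv₁def
  have huu₁ : u = (g : ℤ) * u₁ := (Int.mul_ediv_cancel' hgu).symm
  have hvv₁ : v = (h : ℤ) * v₁ := (Int.mul_ediv_cancel' hhv).symm
  have hmZ : (m : ℤ) = (g : ℤ) * (m₁ : ℤ) := by exact_mod_cast hmm₁
  have hnZ : (n : ℤ) = (h : ℤ) * (n₁ : ℤ) := by exact_mod_cast hnn₁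
  have hm₁cast : ((m₁ : ℕ) : ℤ) = (m : ℤ) / (g : ℤ) := by
    rw [hmZ, Int.mul_ediv_cancel_left _ (by exact_mod_cast hgpos.ne')]
  have hn₁cast : ((n₁ : ℕ) : ℤ) = (n : ℤ) / (h : ℤ) := by
    rw [hnZ, Int.mul_ediv_cancel_left _ (by exact_mod_cast hhpos.ne')]
  have cop1 : IsCoprime u₁ ((m₁ : ℕ) : ℤ) := by
    rw [Int.isCoprime_iff_gcd_eq_one, hu₁def, hm₁cast, hgdef]
    exact Int.gcd_div_gcd_div_gcd (by exact_mod_cast hgpos)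
  have cop2 : IsCoprime v₁ ((n₁ : ℕ) : ℤ) := by
    rw [Int.isCoprime_iff_gcd_eq_one, hv₁def, hn₁cast, hhdef]
    exact Int.gcd_div_gcd_div_gcd (by exact_mod_cast hhpos)
  -- lift u₁
  obtain ⟨U₁, hU₁ne, hU₁mod, hU₁cop⟩ :=
    unitLift u₁ m₁ (x * h) hm₁pos (by positivity) cop1
  have hU₁cop' : IsCoprime U₁ ((m₁ : ℤ) * ((x : ℤ) * (h : ℤ))) := by
    have : ((x * h : ℕ) : ℤ) = (x : ℤ) * (h : ℤ) := by push_cast; ring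
    rwa [this] at hU₁cop
  have hU₁m₁ : IsCoprime U₁ (m₁ : ℤ) := hU₁cop'.of_isCoprime_of_dvd_right (dvd_mul_right _ _)
  have hU₁x : IsCoprime U₁ (x : ℤ) :=
    hU₁cop'.of_isCoprime_of_dvd_right ⟨(m₁ : ℤ) * h, by ring⟩
  have hU₁h : IsCoprime U₁ (h : ℤ) :=
    hU₁cop'.of_isCoprime_of_dvd_right ⟨(m₁ : ℤ) * x, by ring⟩
  -- lift v₁
  obtain ⟨V₁, hV₁ne, hV₁mod, hV₁cop⟩ :=
    unitLift v₁ n₁ (y * g * U₁.natAbs) hn₁pos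
      (by have := Int.natAbs_pos.mpr hU₁ne; positivity) cop2
  have hV₁cop' : IsCoprime V₁ ((n₁ : ℤ) * ((y : ℤ) * (g : ℤ) * (U₁.natAbs : ℤ))) := by
    have : ((y * g * U₁.natAbs : ℕ) : ℤ) = (y : ℤ) * (g : ℤ) * (U₁.natAbs : ℤ) := by
      push_cast; ring
    rwa [this] at hV₁cop
  have hV₁n₁ : IsCoprime V₁ (n₁ : ℤ) := hV₁cop'.of_isCoprime_of_dvd_right (dvd_mul_right _ _)
  have hV₁y : IsCoprime V₁ (y : ℤ) :=
    hV₁cop'.of_isCoprime_of_dvd_right ⟨(n₁ : ℤ) * g * U₁.natAbs, by ring⟩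
  have hV₁g : IsCoprime V₁ (g : ℤ) :=
    hV₁cop'.of_isCoprime_of_dvd_right ⟨(n₁ : ℤ) * y * U₁.natAbs, by ring⟩
  have hV₁U₁ : IsCoprime V₁ U₁ := by
    have h1 : IsCoprime V₁ ((U₁.natAbs : ℕ) : ℤ) :=
      hV₁cop'.of_isCoprime_of_dvd_right ⟨(n₁ : ℤ) * y * g, by ring⟩
    exact h1.of_isCoprime_of_dvd_right (Int.dvd_natAbs.mpr dvd_rfl)
  -- coprimality facts over ℤ
  have huvZ : IsCoprime u v := Int.isCoprime_iff_gcd_eq_one.mpr huv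
  have hgh : IsCoprime (g : ℤ) (h : ℤ) :=
    (huvZ.of_isCoprime_of_dvd_left hgu).of_isCoprime_of_dvd_right hhv
  have hnx' : IsCoprime (n : ℤ) (x : ℤ) :=
    Int.isCoprime_iff_gcd_eq_one.mpr (by rw [Int.gcd_natCast_natCast]; exact hnx)
  have hmy' : IsCoprime (m : ℤ) (y : ℤ) :=
    Int.isCoprime_iff_gcd_eq_one.mpr (by rw [Int.gcd_natCast_natCast]; exact hmy)
  have hxy' : IsCoprime (x : ℤ) (y : ℤ) :=
    Int.isCoprime_iff_gcd_eq_one.mpr (by rw [Int.gcd_natCast_natCast]; exact hxy)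
  have hn₁x : IsCoprime (n₁ : ℤ) (x : ℤ) :=
    hnx'.of_isCoprime_of_dvd_left ⟨(h : ℤ), by rw [hnZ]; ring⟩
  have hm₁y : IsCoprime (m₁ : ℤ) (y : ℤ) :=
    hmy'.of_isCoprime_of_dvd_left ⟨(g : ℤ), by rw [hmZ]; ring⟩
  obtain ⟨s, t, hst⟩ := hn₁x.mul_left hU₁x
  obtain ⟨s', t', hst'⟩ := hm₁y.mul_left hV₁y
  obtain ⟨w, hwx, hwy⟩ := crtZ (x : ℤ) (y : ℤ) s s' hxy'
  refine ⟨(g : ℤ) * U₁, (h : ℤ) * V₁, (m₁ : ℤ) * (n₁ : ℤ) * w, ?_, ?_, ?_, ?_, ?_⟩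
  · -- gcd = 1
    have c_g : IsCoprime (g : ℤ) ((h : ℤ) * V₁) := hgh.mul_right hV₁g.symm
    have c_U₁ : IsCoprime U₁ ((h : ℤ) * V₁) := hU₁h.mul_right hV₁U₁.symm
    exact Int.isCoprime_iff_gcd_eq_one.mp (c_g.mul_left c_U₁)
  · -- U ≡ u [ZMOD m]
    rw [Int.modEq_iff_dvd]
    obtain ⟨c, hc⟩ := Int.modEq_iff_dvd.mp hU₁mod
    exact ⟨c, by rw [huu₁, hmZ]; linear_combination (g : ℤ) * hc⟩
  · -- V ≡ v [ZMOD n]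
    rw [Int.modEq_iff_dvd]
    obtain ⟨c, hc⟩ := Int.modEq_iff_dvd.mp hV₁mod
    exact ⟨c, by rw [hvv₁, hnZ]; linear_combination (h : ℤ) * hc⟩
  · -- k * U ≡ m [ZMOD x * m]
    rw [Int.modEq_iff_dvd]
    obtain ⟨c, hc⟩ := Int.modEq_iff_dvd.mp hwx
    refine ⟨t + (n₁ : ℤ) * U₁ * c, ?_⟩
    rw [hmZ]
    linear_combination (-(g : ℤ) * (m₁ : ℤ)) * hst + ((g : ℤ) * (m₁ : ℤ) * (n₁ : ℤ) * U₁) * hc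
  · -- k * V ≡ n [ZMOD y * n]
    rw [Int.modEq_iff_dvd]
    obtain ⟨c, hc⟩ := Int.modEq_iff_dvd.mp hwy
    refine ⟨t' + (m₁ : ℤ) * V₁ * c, ?_⟩
    rw [hnZ]
    linear_combination (-(h : ℤ) * (n₁ : ℤ)) * hst' + ((h : ℤ) * (n₁ : ℤ) * (m₁ : ℤ) * V₁) * hc

open Int in
theorem stmt4 (m n x y : ℕ) (hm : 0 < m) (hn : 0 < n) (hx : 0 < x) (hy : 0 < y)
    (hxy : Nat.gcd x y = 1) (hmy : Nat.gcd m y = 1) (hnx : Nat.gcd n x = 1)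
    (f : ZMod (x * m) × ZMod (y * n) → ZMod m × ZMod n)
    (hf : f = fun P => (ZMod.castHom (dvd_mul_left m x) (ZMod m) P.1,
                        ZMod.castHom (dvd_mul_left n y) (ZMod n) P.2)) :
    ∀ L : Set (ZMod m × ZMod n), torusLine m n L →
      torusLine (x * m) (y * n) (f ⁻¹' L) := by
  intro L hL
  obtain ⟨A, u, v, huv, hLdef⟩ := hL
  obtain ⟨U, V, k, hUV, hUu, hVv, hkU, hkV⟩ :=
    keyLemma m n x y hm hn hx hy hxy hmy hnx u v huv
  haveI : NeZero m := ⟨hm.ne'⟩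
  haveI : NeZero n := ⟨hn.ne'⟩
  haveI : NeZero (x * m) := ⟨by positivity⟩
  haveI : NeZero (y * n) := ⟨by positivity⟩
  have hxyZ : IsCoprime (x : ℤ) (y : ℤ) :=
    Int.isCoprime_iff_gcd_eq_one.mpr (by rw [Int.gcd_natCast_natCast]; exact hxy)
  have hA1 : (ZMod.castHom (dvd_mul_left m x) (ZMod m)) ((A.1.val : ZMod (x * m))) = A.1 := by
    rw [map_natCast, ZMod.natCast_val, ZMod.cast_id]
  have hA2 : (ZMod.castHom (dvd_mul_left n y) (ZMod n)) ((A.2.val : ZMod (y * n))) = A.2 := by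
    rw [map_natCast, ZMod.natCast_val, ZMod.cast_id]
  have hjU : ∀ j : ℤ, ((j * U : ℤ) : ZMod m) = ((j * u : ℤ) : ZMod m) := fun j => by
    rw [ZMod.intCast_eq_intCast_iff]; exact hUu.mul_left j
  have hjV : ∀ j : ℤ, ((j * V : ℤ) : ZMod n) = ((j * v : ℤ) : ZMod n) := fun j => by
    rw [ZMod.intCast_eq_intCast_iff]; exact hVv.mul_left j
  refine ⟨((A.1.val : ZMod (x * m)), (A.2.val : ZMod (y * n))), U, V, hUV, ?_⟩
  ext P
  simp only [Set.mem_preimage, hf, hLdef, Set.mem_setOf_eq, Prod.mk.injEq, Prod.ext_iff]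
  constructor
  · rintro ⟨j, hj1, hj2⟩
    set q1 : ℤ :=
      ZMod.cast (P.1 - (A.1.val : ZMod (x * m)) - ((j * U : ℤ) : ZMod (x * m))) with hq1def
    set q2 : ℤ :=
      ZMod.cast (P.2 - (A.2.val : ZMod (y * n)) - ((j * V : ℤ) : ZMod (y * n))) with hq2def
    have hq1 : ((q1 : ℤ) : ZMod (x * m))
        = P.1 - (A.1.val : ZMod (x * m)) - ((j * U : ℤ) : ZMod (x * m)) :=
      ZMod.intCast_zmod_cast _
    have hq2 : ((q2 : ℤ) : ZMod (y * n))
        = P.2 - (A.2.val : ZMod (y * n)) - ((j * V : ℤ) : ZMod (y * n)) :=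
      ZMod.intCast_zmod_cast _
    have hdvd1 : (m : ℤ) ∣ q1 := by
      rw [← ZMod.intCast_zmod_eq_zero_iff_dvd]
      have e : ((q1 : ℤ) : ZMod m)
          = (ZMod.castHom (dvd_mul_left m x) (ZMod m)) (((q1 : ℤ)) : ZMod (x * m)) :=
        (map_intCast _ _).symm
      rw [e, hq1, map_sub, map_sub, hA1, hj1, map_intCast, hjU j]
      ring
    have hdvd2 : (n : ℤ) ∣ q2 := by
      rw [← ZMod.intCast_zmod_eq_zero_iff_dvd]
      have e : ((q2 : ℤ) : ZMod n)
          = (ZMod.castHom (dvd_mul_left n y) (ZMod n)) (((q2 : ℤ)) : ZMod (y * n)) :=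
        (map_intCast _ _).symm
      rw [e, hq2, map_sub, map_sub, hA2, hj2, map_intCast, hjV j]
      ring
    obtain ⟨a, ha⟩ := hdvd1
    obtain ⟨b, hb⟩ := hdvd2
    obtain ⟨r, hrx, hry⟩ := crtZ (x : ℤ) (y : ℤ) a b hxyZ
    have e1 : ((q1 : ℤ) : ZMod (x * m)) = (((r * (k * U)) : ℤ) : ZMod (x * m)) := by
      rw [ZMod.intCast_eq_intCast_iff]
      have step1 : q1 ≡ (m : ℤ) * r [ZMOD ((x * m : ℕ) : ℤ)] := by
        rw [Int.modEq_iff_dvd]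
        obtain ⟨c, hc⟩ := Int.modEq_iff_dvd.mp hrx
        refine ⟨-c, ?_⟩; push_cast
        rw [ha]; linear_combination (-(m : ℤ)) * hc
      have step2 : (m : ℤ) * r ≡ r * (k * U) [ZMOD ((x * m : ℕ) : ℤ)] := by
        have := (hkU.symm.mul_left r)
        have e : ((x * m : ℕ) : ℤ) = (x : ℤ) * m := by push_cast; ring
        rw [e]
        calc (m : ℤ) * r = r * (m : ℤ) := by ring
          _ ≡ r * (k * U) [ZMOD ((x : ℤ) * m)] := this
      exact step1.trans step2
    have e2 : ((q2 : ℤ) : ZMod (y * n)) = (((r * (k * V)) : ℤ) : ZMod (y * n)) := by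
      rw [ZMod.intCast_eq_intCast_iff]
      have step1 : q2 ≡ (n : ℤ) * r [ZMOD ((y * n : ℕ) : ℤ)] := by
        rw [Int.modEq_iff_dvd]
        obtain ⟨c, hc⟩ := Int.modEq_iff_dvd.mp hry
        refine ⟨-c, ?_⟩; push_cast
        rw [hb]; linear_combination (-(n : ℤ)) * hc
      have step2 : (n : ℤ) * r ≡ r * (k * V) [ZMOD ((y * n : ℕ) : ℤ)] := by
        have := (hkV.symm.mul_left r)
        have e : ((y * n : ℕ) : ℤ) = (y : ℤ) * n := by push_cast; ring
        rw [e]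
        calc (n : ℤ) * r = r * (n : ℤ) := by ring
          _ ≡ r * (k * V) [ZMOD ((y : ℤ) * n)] := this
      exact step1.trans step2
    refine ⟨j + r * k, ?_, ?_⟩
    · have hP1 : P.1 = (A.1.val : ZMod (x * m)) + ((j * U : ℤ) : ZMod (x * m))
          + ((q1 : ℤ) : ZMod (x * m)) := by rw [hq1]; ring
      rw [hP1, e1]; push_cast; ring
    · have hP2 : P.2 = (A.2.val : ZMod (y * n)) + ((j * V : ℤ) : ZMod (y * n))
          + ((q2 : ℤ) : ZMod (y * n)) := by rw [hq2]; ring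
      rw [hP2, e2]; push_cast; ring
  · rintro ⟨j, hj1, hj2⟩
    refine ⟨j, ?_, ?_⟩
    · rw [hj1, map_add, hA1, map_intCast, hjU j]
    · rw [hj2, map_add, hA2, map_intCast, hjV j]
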